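/- Let Y be a real-valued random variable with E[Y²] < ∞ whose cumulative distribution function is continuous and strictly increasing, let τ ∈ (0,1), let Q_Y be the (unique) τ-quantile of Y and ES_Y := E[Y | Y ≥ Q_Y] its τ-expected shortfall. Define the multi-objective loss L^{(Q,ES)}((v,μ), y) := (ρ(y − v), 1{y > v}(y − μ)²) with tick loss ρ(u) := u(τ − 1{u ≤ 0}). Then for all v ∈ R and μ ∈ R, E[L^{(Q,ES)}((Q_Y, ES_Y), Y)] ≤_lex E[L^{(Q,ES)}((v,μ), Y)], where ≤_lex is the lexicographic order on R²: i.e., the true pair (Q_Y, ES_Y) minimizes the R²-valued expected loss with respect to the lexicographic order. -/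

import Mathlib

open MeasureTheory ProbabilityTheory Filter Set

noncomputable section

namespace SNQR

/-- Euclidean norm of a finite real vector. -/
def vnorm {ι : Type*} [Fintype ι] (x : ι → ℝ) : ℝ := Real.sqrt (∑ i, x i ^ 2)

/-- Frobenius (Euclidean) norm of a matrix. -/
def mnorm {ι κ : Type*} [Fintype ι] [Fintype κ] (M : Matrix ι κ ℝ) : ℝ :=
  Real.sqrt (∑ i, ∑ j, M i j ^ 2)

/-- Euclidean dot product. -/
def dotp {ι : Type*} [Fintype ι] (x y : ι → ℝ) : ℝ := ∑ i, x i * y i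

/-- The tick (pinball) loss `ρ(u) = u (τ - 1{u ≤ 0})`. -/
def tick (τ u : ℝ) : ℝ := u * (τ - if u ≤ 0 then 1 else 0)

/-- The quantile generalized error function `ψ(u) = τ - 1{u ≤ 0}`. -/
def psi (τ u : ℝ) : ℝ := τ - if u ≤ 0 then 1 else 0

/-- A function `f : ℝ → E` is càdlàg on `[a,b]`: right-continuous on `[a,b)` and
with left limits on `(a,b]`. -/
def CadlagOn {E : Type*} [TopologicalSpace E] (f : ℝ → E) (a b : ℝ) : Prop :=
  (∀ t ∈ Set.Ico a b, Filter.Tendsto f (nhdsWithin t (Set.Ici t)) (nhds (f t))) ∧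
  (∀ t ∈ Set.Ioc a b, ∃ L, Filter.Tendsto f (nhdsWithin t (Set.Iio t)) (nhds L))

/-- The Skorohod distance between two `ℝ^ι`-valued paths on `[a,b]`:
the infimum over continuous strictly increasing time changes `λ` of `[a,b]` fixing the
endpoints of the maximum of `‖λ - id‖∞` and `‖f ∘ λ - g‖∞`. -/
def skorohodDist {ι : Type*} [Fintype ι] (a b : ℝ) (f g : ℝ → ι → ℝ) : ℝ :=
  sInf { r : ℝ | 0 ≤ r ∧ ∃ lam : ℝ → ℝ,
    ContinuousOn lam (Set.Icc a b) ∧ StrictMonoOn lam (Set.Icc a b) ∧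
    lam a = a ∧ lam b = b ∧
    ∀ t ∈ Set.Icc a b, |lam t - t| ≤ r ∧ vnorm (f (lam t) - g t) ≤ r }

/-- Convergence in distribution in the Skorohod space `D_ι[a,b]` of a sequence of
`ℝ^ι`-valued processes (defined on a probability space `(Ω, P)`) to a limiting process
(defined on a possibly different probability space `(Ω', P')`), characterized through
bounded Lipschitz (w.r.t. the Skorohod distance) test functionals. -/
def TendstoInDistD {ι : Type*} [Fintype ι] {Ω Ω' : Type*}
    [MeasurableSpace Ω] [MeasurableSpace Ω'] (a b : ℝ) (P : Measure Ω) (P' : Measure Ω')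
    (Xn : ℕ → Ω → ℝ → ι → ℝ) (X : Ω' → ℝ → ι → ℝ) : Prop :=
  ∀ (F : (ℝ → ι → ℝ) → ℝ) (M L : ℝ),
    (∀ f, |F f| ≤ M) →
    (∀ f g, |F f - F g| ≤ L * skorohodDist a b f g) →
    Filter.Tendsto (fun n => ∫ ω, F (Xn n ω) ∂P) Filter.atTop
      (nhds (∫ ω, F (X ω) ∂P'))

/-- Convergence in distribution of real-valued random variables, characterized through
bounded Lipschitz test functions. -/
def TendstoInDistR {Ω Ω' : Type*} [MeasurableSpace Ω] [MeasurableSpace Ω']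
    (P : Measure Ω) (P' : Measure Ω') (Tn : ℕ → Ω → ℝ) (T : Ω' → ℝ) : Prop :=
  ∀ (F : ℝ → ℝ) (M L : ℝ),
    (∀ x, |F x| ≤ M) →
    (∀ x y, |F x - F y| ≤ L * |x - y|) →
    Filter.Tendsto (fun n => ∫ ω, F (Tn n ω) ∂P) Filter.atTop
      (nhds (∫ ω, F (T ω) ∂P'))

/-- `W` is a `ι`-variate standard Brownian motion on `[0,∞)` under `P`:
it starts at `0`, has a.s. continuous paths, its scalar increments over disjoint time
intervals and across components are jointly independent, and each scalar increment
`W t i - W s i` is `N(0, t - s)` distributed. -/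
def IsStdBM {ι Ω' : Type*} [Fintype ι] [MeasurableSpace Ω'] (P : Measure Ω')
    (W : ℝ → Ω' → ι → ℝ) : Prop :=
  (∀ᵐ ω ∂P, W 0 ω = 0) ∧
  (∀ᵐ ω ∂P, Continuous fun t => W t ω) ∧
  (∀ t : ℝ, Measurable fun ω => W t ω) ∧
  (∀ (m : ℕ) (t : Fin (m + 1) → ℝ), (∀ j, 0 ≤ t j) → Monotone t →
    ProbabilityTheory.iIndepFun
      (fun p : Fin m × ι => fun ω => W (t p.1.succ) ω p.2 - W (t p.1.castSucc) ω p.2) P) ∧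
  (∀ s t : ℝ, 0 ≤ s → s ≤ t → ∀ i,
    P.map (fun ω => W t ω i - W s ω i) = gaussianReal 0 (Real.toNNReal (t - s)))

/-- The σ-algebra generated by the random variables `Z t`, `t ∈ S`. -/
def sigmaSeg {Ω E : Type*} [MeasurableSpace E] (Z : ℕ → Ω → E) (S : Set ℕ) :
    MeasurableSpace Ω :=
  ⨆ t ∈ S, MeasurableSpace.comap (Z t) inferInstance

/-- The α-mixing coefficient `α(m)` of the sequence `Z`. -/
def alphaMix {Ω E : Type*} [MeasurableSpace Ω] [MeasurableSpace E] (P : Measure Ω)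
    (Z : ℕ → Ω → E) (m : ℕ) : ℝ :=
  sSup { x : ℝ | ∃ (j : ℕ) (A B : Set Ω),
    MeasurableSet[sigmaSeg Z (Set.Icc 1 j)] A ∧
    MeasurableSet[sigmaSeg Z (Set.Ici (j + m))] B ∧
    x = |(P (A ∩ B)).toReal - (P A).toReal * (P B).toReal| }

/-- The sequence `Z` is α-mixing with mixing coefficients of size `-q`, i.e.
`α(m) = O(m^{-φ})` for some `φ > q`. -/
def AlphaMixingOfSize {Ω E : Type*} [MeasurableSpace Ω] [MeasurableSpace E]
    (P : Measure Ω) (Z : ℕ → Ω → E) (q : ℝ) : Prop :=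
  ∃ φ : ℝ, q < φ ∧ ∃ C : ℝ, ∀ m : ℕ, 1 ≤ m → alphaMix P Z m ≤ C * (m : ℝ) ^ (-φ)

end SNQR

section Helpers

open SNQR

/-- Decomposition of the tick-loss difference into a subgradient term and a gap term. -/
lemma tick_decomp (τ Q v y : ℝ) :
    tick τ (y - v) - tick τ (y - Q) =
      (τ - (if y ≤ Q then 1 else 0)) * (Q - v)
        + (y - v) * ((if y ≤ Q then (1:ℝ) else 0) - (if y ≤ v then (1:ℝ) else 0)) := by
  simp only [tick, sub_nonpos]
  split_ifs <;> ring

/-- The gap term is nonnegative. -/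
lemma tick_gap_nonneg (Q v y : ℝ) :
    0 ≤ (y - v) * ((if y ≤ Q then (1:ℝ) else 0) - (if y ≤ v then (1:ℝ) else 0)) := by
  split_ifs with h1 h2 h2 <;> nlinarith

/-- The tick loss is 1-Lipschitz-bounded: `|tick τ u| ≤ |u|` for `τ ∈ [0,1]`. -/
lemma abs_tick_le {τ : ℝ} (h0 : 0 ≤ τ) (h1 : τ ≤ 1) (u : ℝ) : |tick τ u| ≤ |u| := by
  unfold tick
  rw [abs_mul]
  have hb : |τ - if u ≤ 0 then (1:ℝ) else 0| ≤ 1 := by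
    split_ifs <;> rw [abs_le] <;> constructor <;> linarith
  nlinarith [abs_nonneg u]

end Helpers

open SNQR Matrix in
/-- **Multi-objective elicitability of the (quantile, expected shortfall) pair.**
With the multi-objective loss `L((v,μ), y) = (ρ(y - v), 1{y > v}(y - μ)²)`, the true pair
`(Q_Y, ES_Y)` minimizes the `ℝ²`-valued expected loss with respect to the lexicographic
order on `ℝ²`. -/
theorem quantile_es_multiobjective_elicitable
    {Ω : Type*} [MeasurableSpace Ω] (P : Measure Ω) [IsProbabilityMeasure P]
    (Y : Ω → ℝ) (hYmeas : Measurable Y) (hY2 : MemLp Y 2 P)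
    (τ : ℝ) (hτ : τ ∈ Set.Ioo (0 : ℝ) 1)
    -- the CDF of `Y` is continuous and strictly increasing
    (hFcont : Continuous fun y : ℝ => (P {ω | Y ω ≤ y}).toReal)
    (hFstrict : StrictMono fun y : ℝ => (P {ω | Y ω ≤ y}).toReal)
    -- the (unique) `τ`-quantile of `Y`
    (QY : ℝ) (hQY : (P {ω | Y ω ≤ QY}).toReal = τ)
    -- the `τ`-expected shortfall `ES_Y = E[Y | Y ≥ Q_Y]`
    (ESY : ℝ)
    (hESY : ESY = (∫ ω, (if QY ≤ Y ω then Y ω else 0) ∂P) /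
      (P {ω | QY ≤ Y ω}).toReal) :
    ∀ v μ : ℝ,
      (∫ ω, tick τ (Y ω - QY) ∂P) < (∫ ω, tick τ (Y ω - v) ∂P) ∨
      ((∫ ω, tick τ (Y ω - QY) ∂P) = (∫ ω, tick τ (Y ω - v) ∂P) ∧
        (∫ ω, (if QY < Y ω then (Y ω - ESY) ^ 2 else 0) ∂P) ≤
        (∫ ω, (if v < Y ω then (Y ω - μ) ^ 2 else 0) ∂P)) := by
  obtain ⟨hτ0, hτ1⟩ := hτ
  have hYint : Integrable Y P := hY2.integrable one_le_two
  have msIic : ∀ t : ℝ, MeasurableSet {ω | Y ω ≤ t} := fun t => hYmeas measurableSet_Iic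
  have msIoi : ∀ t : ℝ, MeasurableSet {ω | t < Y ω} := fun t => hYmeas measurableSet_Ioi
  -- integrability of the tick losses
  have itick : ∀ c : ℝ, Integrable (fun ω => tick τ (Y ω - c)) P := by
    intro c
    have hmeas : Measurable fun ω => tick τ (Y ω - c) := by
      have h1 : Measurable fun u : ℝ => tick τ u := by
        unfold tick
        exact measurable_id.mul (measurable_const.sub
          (Measurable.ite (measurableSet_Iic (a := (0:ℝ))) measurable_const measurable_const))
      exact h1.comp (hYmeas.sub measurable_const)
    have ig : Integrable (fun ω => |Y ω| + |c|) P := hYint.abs.add (integrable_const _)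
    refine Integrable.mono' ig hmeas.aestronglyMeasurable
      (Filter.Eventually.of_forall fun ω => ?_)
    calc ‖tick τ (Y ω - c)‖ = |tick τ (Y ω - c)| := rfl
      _ ≤ |Y ω - c| := abs_tick_le hτ0.le hτ1.le _
      _ ≤ |Y ω| + |c| := by
          rw [sub_eq_add_neg]
          exact (abs_add_le _ _).trans (by rw [abs_neg])
  -- integrability of truncated integrands
  have hIndInt : ∀ (g : Ω → ℝ), Integrable g P →
      Integrable (fun ω => if QY < Y ω then g ω else 0) P := by
    intro g hg
    have e : (fun ω => if QY < Y ω then g ω else 0) = Set.indicator {ω | QY < Y ω} g := by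
      funext ω; simp [Set.indicator_apply, Set.mem_setOf_eq]
    rw [e]
    exact hg.indicator (msIoi QY)
  intro v μ
  rcases eq_or_ne v QY with hvq | hv
  · -- the equality (second component) case
    rw [hvq]
    right
    refine ⟨rfl, ?_⟩
    -- the atom at `QY` is null
    have hatom : P {ω | Y ω = QY} = 0 := by
      have h1 : Filter.Tendsto (fun n : ℕ => QY - 1 / (n + 1 : ℝ)) Filter.atTop (nhds QY) := by
        simpa using (tendsto_const_nhds (x := QY)).sub tendsto_one_div_add_atTop_nhds_zero_nat
      have h2 : Filter.Tendsto (fun n : ℕ => (P {ω | Y ω ≤ QY - 1 / (n + 1 : ℝ)}).toReal)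
          Filter.atTop (nhds ((P {ω | Y ω ≤ QY}).toReal)) := (hFcont.tendsto QY).comp h1
      have hFseq : Filter.Tendsto (fun n : ℕ => (P {ω | Y ω ≤ QY}).toReal
          - (P {ω | Y ω ≤ QY - 1 / (n + 1)}).toReal) Filter.atTop (nhds 0) := by
        simpa using (tendsto_const_nhds (x := (P {ω | Y ω ≤ QY}).toReal)).sub h2
      have hb : ∀ n : ℕ, (P {ω | Y ω = QY}).toReal
          ≤ (P {ω | Y ω ≤ QY}).toReal - (P {ω | Y ω ≤ QY - 1 / (n + 1)}).toReal := by
        intro n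
        have hpos : (0:ℝ) < 1 / ((n : ℝ) + 1) := by positivity
        have hstep : QY - 1 / ((n : ℝ) + 1) ≤ QY := by linarith
        have hsub : {ω | Y ω ≤ QY - 1 / ((n : ℝ) + 1)} ⊆ {ω | Y ω ≤ QY} :=
          fun ω hω => le_trans hω hstep
        have hsub2 : {ω | Y ω = QY} ⊆ {ω | Y ω ≤ QY} \ {ω | Y ω ≤ QY - 1 / ((n : ℝ) + 1)} := by
          intro ω hω
          have hω' : Y ω = QY := hω
          refine ⟨hω'.le, ?_⟩
          simp only [Set.mem_setOf_eq, hω']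
          linarith
        calc (P {ω | Y ω = QY}).toReal
            ≤ (P ({ω | Y ω ≤ QY} \ {ω | Y ω ≤ QY - 1 / ((n : ℝ) + 1)})).toReal :=
              ENNReal.toReal_mono (measure_ne_top _ _) (measure_mono hsub2)
          _ = (P {ω | Y ω ≤ QY}).toReal - (P {ω | Y ω ≤ QY - 1 / ((n : ℝ) + 1)}).toReal := by
              rw [measure_diff hsub (msIic _).nullMeasurableSet (measure_ne_top _ _),
                ENNReal.toReal_sub_of_le (measure_mono hsub) (measure_ne_top _ _)]
      have h0 : (P {ω | Y ω = QY}).toReal ≤ 0 := ge_of_tendsto' hFseq hb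
      have h0' : (P {ω | Y ω = QY}).toReal = 0 := le_antisymm h0 ENNReal.toReal_nonneg
      exact ((ENNReal.toReal_eq_zero_iff _).mp h0').resolve_right (measure_ne_top _ _)
    have hAeqm : P {ω | QY ≤ Y ω} = P {ω | QY < Y ω} := by
      apply le_antisymm
      · have hsub : {ω | QY ≤ Y ω} ⊆ {ω | QY < Y ω} ∪ {ω | Y ω = QY} := by
          intro ω hω
          simp only [Set.mem_setOf_eq] at hω ⊢
          rcases eq_or_lt_of_le hω with h | h
          · exact Or.inr h.symm
          · exact Or.inl h
        calc P {ω | QY ≤ Y ω} ≤ P ({ω | QY < Y ω} ∪ {ω | Y ω = QY}) := measure_mono hsub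
          _ ≤ P {ω | QY < Y ω} + P {ω | Y ω = QY} := measure_union_le _ _
          _ = P {ω | QY < Y ω} := by rw [hatom, add_zero]
      · refine measure_mono fun ω hω => ?_
        simp only [Set.mem_setOf_eq] at hω ⊢
        exact hω.le
    have hne : ∀ᵐ ω ∂P, Y ω ≠ QY := by
      rw [ae_iff]
      simpa only [ne_eq, not_not] using hatom
    have hint_eq : (∫ ω, (if QY ≤ Y ω then Y ω else 0) ∂P)
        = ∫ ω, (if QY < Y ω then Y ω else 0) ∂P := by
      refine integral_congr_ae ?_
      filter_upwards [hne] with ω hω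
      rcases lt_trichotomy QY (Y ω) with h | h | h
      · simp [h, h.le]
      · exact absurd h.symm hω
      · simp [not_le.mpr h, h.asymm]
    have hPA : (P {ω | QY < Y ω}).toReal = 1 - τ := by
      have hAc : {ω | QY < Y ω} = {ω | Y ω ≤ QY}ᶜ := by
        ext ω; simp [not_le]
      rw [hAc, measure_compl (msIic QY) (measure_ne_top _ _), measure_univ,
        ENNReal.toReal_sub_of_le prob_le_one ENNReal.one_ne_top, ENNReal.toReal_one, hQY]
    have hppos : 0 < (P {ω | QY < Y ω}).toReal := by rw [hPA]; linarith
    have hES' : ESY = (∫ ω, (if QY < Y ω then Y ω else 0) ∂P) / (P {ω | QY < Y ω}).toReal := by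
      rw [hESY, hint_eq, hAeqm]
    have hmes : (∫ ω, (if QY < Y ω then Y ω else 0) ∂P)
        = ESY * (P {ω | QY < Y ω}).toReal := by
      rw [hES']; field_simp
    have iY2 : Integrable (fun ω => if QY < Y ω then Y ω ^ 2 else 0) P :=
      hIndInt _ hY2.integrable_sq
    have iY1 : Integrable (fun ω => if QY < Y ω then Y ω else 0) P := hIndInt _ hYint
    have i1 : Integrable (fun ω => if QY < Y ω then (1:ℝ) else 0) P :=
      hIndInt _ (integrable_const 1)
    have hInd1lt : ∫ ω, (if QY < Y ω then (1:ℝ) else 0) ∂P = (P {ω | QY < Y ω}).toReal := by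
      have e : (fun ω => if QY < Y ω then (1:ℝ) else 0)
          = Set.indicator {ω | QY < Y ω} (fun _ => 1) := by
        funext ω; simp [Set.indicator_apply, Set.mem_setOf_eq]
      rw [e, integral_indicator_const (1:ℝ) (msIoi QY), smul_eq_mul, mul_one, measureReal_def]
    have hexp : ∀ c : ℝ, (∫ ω, (if QY < Y ω then (Y ω - c) ^ 2 else 0) ∂P)
        = (∫ ω, (if QY < Y ω then Y ω ^ 2 else 0) ∂P)
          - 2 * c * (∫ ω, (if QY < Y ω then Y ω else 0) ∂P)
          + c ^ 2 * (P {ω | QY < Y ω}).toReal := by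
      intro c
      have hfun : (fun ω => if QY < Y ω then (Y ω - c) ^ 2 else 0)
          = fun ω => ((if QY < Y ω then Y ω ^ 2 else 0)
              - (2 * c) * (if QY < Y ω then Y ω else 0))
              + c ^ 2 * (if QY < Y ω then (1:ℝ) else 0) := by
        funext ω; split_ifs <;> ring
      have iB : Integrable (fun ω => (2 * c) * (if QY < Y ω then Y ω else 0)) P :=
        iY1.const_mul _
      have iAB : Integrable (fun ω => (if QY < Y ω then Y ω ^ 2 else 0)
          - (2 * c) * (if QY < Y ω then Y ω else 0)) P := iY2.sub iB
      have iC : Integrable (fun ω => c ^ 2 * (if QY < Y ω then (1:ℝ) else 0)) P :=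
        i1.const_mul _
      rw [hfun, integral_add iAB iC, integral_sub iY2 iB, integral_const_mul,
        integral_const_mul, hInd1lt]
    rw [hexp ESY, hexp μ, hmes]
    nlinarith [mul_nonneg hppos.le (sq_nonneg (ESY - μ))]
  · -- the strict (first component) case
    left
    have ib : Integrable (fun ω => if Y ω ≤ QY then (1:ℝ) else 0) P := by
      have e : (fun ω => if Y ω ≤ QY then (1:ℝ) else 0)
          = Set.indicator {ω | Y ω ≤ QY} (fun _ => 1) := by
        funext ω; simp [Set.indicator_apply, Set.mem_setOf_eq]
      rw [e]; exact (integrable_const 1).indicator (msIic QY)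
    have ihm : Measurable fun ω => (Y ω - v) *
        ((if Y ω ≤ QY then (1:ℝ) else 0) - (if Y ω ≤ v then (1:ℝ) else 0)) := by
      have ma : Measurable fun ω => (if Y ω ≤ v then (1:ℝ) else 0) :=
        Measurable.ite (msIic v) measurable_const measurable_const
      have mb : Measurable fun ω => (if Y ω ≤ QY then (1:ℝ) else 0) :=
        Measurable.ite (msIic QY) measurable_const measurable_const
      exact (hYmeas.sub measurable_const).mul (mb.sub ma)
    have ih : Integrable (fun ω => (Y ω - v) *
        ((if Y ω ≤ QY then (1:ℝ) else 0) - (if Y ω ≤ v then (1:ℝ) else 0))) P := by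
      have ig : Integrable (fun ω => |Y ω| + |v|) P := hYint.abs.add (integrable_const _)
      refine Integrable.mono' ig ihm.aestronglyMeasurable
        (Filter.Eventually.of_forall fun ω => ?_)
      rw [Real.norm_eq_abs, abs_mul]
      have h1 : |(if Y ω ≤ QY then (1:ℝ) else 0) - (if Y ω ≤ v then (1:ℝ) else 0)| ≤ 1 := by
        split_ifs <;> norm_num
      have h2 : |Y ω - v| ≤ |Y ω| + |v| := by
        rw [sub_eq_add_neg]
        exact (abs_add_le _ _).trans (by rw [abs_neg])
      nlinarith [abs_nonneg (Y ω - v)]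
    have hbint : ∫ ω, (if Y ω ≤ QY then (1:ℝ) else 0) ∂P = τ := by
      have e : (fun ω => if Y ω ≤ QY then (1:ℝ) else 0)
          = Set.indicator {ω | Y ω ≤ QY} (fun _ => 1) := by
        funext ω; simp [Set.indicator_apply, Set.mem_setOf_eq]
      rw [e, integral_indicator_const (1:ℝ) (msIic QY), smul_eq_mul, mul_one, measureReal_def, hQY]
    have hsplit : (∫ ω, tick τ (Y ω - v) ∂P) - (∫ ω, tick τ (Y ω - QY) ∂P)
        = ∫ ω, (Y ω - v) *
            ((if Y ω ≤ QY then (1:ℝ) else 0) - (if Y ω ≤ v then (1:ℝ) else 0)) ∂P := by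
      rw [← integral_sub (itick v) (itick QY)]
      have hfun : (fun ω => tick τ (Y ω - v) - tick τ (Y ω - QY))
          = fun ω => (τ - (if Y ω ≤ QY then (1:ℝ) else 0)) * (QY - v)
              + (Y ω - v) * ((if Y ω ≤ QY then (1:ℝ) else 0) - (if Y ω ≤ v then (1:ℝ) else 0)) := by
        funext ω; exact tick_decomp τ QY v (Y ω)
      have iT : Integrable (fun ω => (τ - (if Y ω ≤ QY then (1:ℝ) else 0)) * (QY - v)) P :=
        ((integrable_const τ).sub ib).mul_const _
      have iTb : Integrable (fun ω => τ - (if Y ω ≤ QY then (1:ℝ) else 0)) P :=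
        (integrable_const τ).sub ib
      rw [hfun, integral_add iT ih, integral_mul_const,
        integral_sub (integrable_const τ) ib, hbint, integral_const, measureReal_def, measure_univ]
      simp
    have hkey : 0 < ∫ ω, (Y ω - v) *
        ((if Y ω ≤ QY then (1:ℝ) else 0) - (if Y ω ≤ v then (1:ℝ) else 0)) ∂P := by
      obtain ⟨t1, t2, c, hc, ht12, hlb⟩ :
          ∃ t1 t2 c : ℝ, 0 < c ∧ t1 < t2 ∧ ∀ ω, t1 < Y ω → Y ω ≤ t2 →
            c ≤ (Y ω - v) *
              ((if Y ω ≤ QY then (1:ℝ) else 0) - (if Y ω ≤ v then (1:ℝ) else 0)) := by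
        rcases hv.lt_or_gt with hlt | hlt
        · refine ⟨v + (QY - v)/3, v + 2*(QY - v)/3, (QY - v)/3,
            by linarith, by linarith, fun ω h1 h2 => ?_⟩
          have hbv : ¬ Y ω ≤ v := by push_neg; linarith
          have hbQ : Y ω ≤ QY := by linarith
          rw [if_pos hbQ, if_neg hbv, sub_zero, mul_one]
          linarith
        · refine ⟨QY + (v - QY)/3, QY + 2*(v - QY)/3, (v - QY)/3,
            by linarith, by linarith, fun ω h1 h2 => ?_⟩
          have hbv : Y ω ≤ v := by linarith
          have hbQ : ¬ Y ω ≤ QY := by push_neg; linarith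
          rw [if_neg hbQ, if_pos hbv, zero_sub, mul_neg_one]
          linarith
      have msS : MeasurableSet ({ω | Y ω ≤ t2} \ {ω | Y ω ≤ t1}) := (msIic t2).diff (msIic t1)
      have hsub : {ω | Y ω ≤ t1} ⊆ {ω | Y ω ≤ t2} := fun ω hω => le_trans hω ht12.le
      have hPS : (P ({ω | Y ω ≤ t2} \ {ω | Y ω ≤ t1})).toReal
          = (P {ω | Y ω ≤ t2}).toReal - (P {ω | Y ω ≤ t1}).toReal := by
        rw [measure_diff hsub (msIic t1).nullMeasurableSet (measure_ne_top _ _),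
          ENNReal.toReal_sub_of_le (measure_mono hsub) (measure_ne_top _ _)]
      have hPSpos : 0 < (P ({ω | Y ω ≤ t2} \ {ω | Y ω ≤ t1})).toReal := by
        rw [hPS]
        have := hFstrict ht12
        simpa using sub_pos.mpr this
      have hhS : ∀ ω ∈ ({ω | Y ω ≤ t2} \ {ω | Y ω ≤ t1}),
          c ≤ (Y ω - v) *
            ((if Y ω ≤ QY then (1:ℝ) else 0) - (if Y ω ≤ v then (1:ℝ) else 0)) :=
        fun ω hω => hlb ω (not_le.mp hω.2) hω.1
      calc (0:ℝ) < c * (P ({ω | Y ω ≤ t2} \ {ω | Y ω ≤ t1})).toReal := by positivity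
        _ ≤ ∫ ω in ({ω | Y ω ≤ t2} \ {ω | Y ω ≤ t1}), (Y ω - v) *
              ((if Y ω ≤ QY then (1:ℝ) else 0) - (if Y ω ≤ v then (1:ℝ) else 0)) ∂P :=
            setIntegral_ge_of_const_le_real msS (measure_ne_top _ _) hhS ih.integrableOn
        _ ≤ ∫ ω, (Y ω - v) *
              ((if Y ω ≤ QY then (1:ℝ) else 0) - (if Y ω ≤ v then (1:ℝ) else 0)) ∂P :=
            setIntegral_le_integral ih
              (Filter.Eventually.of_forall fun ω => tick_gap_nonneg QY v (Y ω))
    linarith [hsplit, hkey]
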